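/- arXiv:2405.13390 — 2 statements merged into one kernel-verified Lean document; each statement's English description precedes it below -/
import Mathlib

section
/- Let K : ℝ^d → ℝ be integrable and bounded with ‖u‖^d K(u) → 0 as ‖u‖ → ∞ (‖·‖ the Euclidean norm), and let g : ℝ^d → ℝ be bounded and measurable and continuous at a point x ∈ ℝ^d. Then lim_{h → 0⁺} h^{−d} ∫_{ℝ^d} K((x−y)/h) g(y) dy = g(x) ∫_{ℝ^d} K(u) du. -/
open MeasureTheory Filter

/-- Bochner-type approximation lemma in `ℝ^d`: if `K` is integrable and bounded with
`‖u‖^d K(u) → 0` as `‖u‖ → ∞`, and `g` is bounded, measurable and continuous at `x`, then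
`h^{−d} ∫ K((x−y)/h) g(y) dy → g(x) ∫ K(u) du` as `h → 0⁺`. -/
theorem bochner_approximation {d : ℕ}
    (K : EuclideanSpace ℝ (Fin d) → ℝ) (hKint : Integrable K)
    (hKbdd : ∃ C, ∀ u, |K u| ≤ C)
    (hKtail : Tendsto (fun u : EuclideanSpace ℝ (Fin d) => ‖u‖ ^ d * K u)
      (Filter.comap norm Filter.atTop) (nhds 0))
    (g : EuclideanSpace ℝ (Fin d) → ℝ) (hgmeas : Measurable g)
    (hgbdd : ∃ C, ∀ u, |g u| ≤ C)
    (x : EuclideanSpace ℝ (Fin d)) (hgx : ContinuousAt g x) :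
    Tendsto
      (fun h : ℝ => (h ^ d)⁻¹ * ∫ y : EuclideanSpace ℝ (Fin d), K (h⁻¹ • (x - y)) * g y)
      (nhdsWithin 0 (Set.Ioi 0))
      (nhds (g x * ∫ u : EuclideanSpace ℝ (Fin d), K u)) := by
  obtain ⟨C, hC⟩ := hgbdd
  have hfin : Module.finrank ℝ (EuclideanSpace ℝ (Fin d)) = d := finrank_euclideanSpace_fin
  -- Step 1: change of variables
  have key : ∀ h : ℝ, h ∈ Set.Ioi (0:ℝ) →
      ∫ u : EuclideanSpace ℝ (Fin d), K u * g (x - h • u)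
        = (h ^ d)⁻¹ * ∫ y : EuclideanSpace ℝ (Fin d), K (h⁻¹ • (x - y)) * g y := by
    intro h hh
    have h0 : h ≠ 0 := ne_of_gt hh
    have e1 : (∫ y : EuclideanSpace ℝ (Fin d), K (h⁻¹ • (x - y)) * g y)
        = ∫ y : EuclideanSpace ℝ (Fin d), K (h⁻¹ • y) * g (x - y) := by
      rw [← integral_sub_left_eq_self
        (fun y : EuclideanSpace ℝ (Fin d) => K (h⁻¹ • y) * g (x - y)) volume x]
      simp
    have e2 := MeasureTheory.Measure.integral_comp_smul (μ := volume)
      (fun u : EuclideanSpace ℝ (Fin d) => K u * g (x - h • u)) h⁻¹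
    have e3 : (fun y : EuclideanSpace ℝ (Fin d) =>
        K (h⁻¹ • y) * g (x - h • h⁻¹ • y)) = fun y => K (h⁻¹ • y) * g (x - y) := by
      funext y
      rw [smul_smul, mul_inv_cancel₀ h0, one_smul]
    rw [e1, ← e3, e2, hfin, inv_pow, inv_inv, abs_of_pos (pow_pos hh d), smul_eq_mul,
      ← mul_assoc, inv_mul_cancel₀ (ne_of_gt (pow_pos hh d)), one_mul]
  -- Step 2: dominated convergence
  have meas : ∀ h : ℝ, AEStronglyMeasurable
      (fun u : EuclideanSpace ℝ (Fin d) => K u * g (x - h • u)) volume := by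
    intro h
    exact hKint.aestronglyMeasurable.mul
      ((hgmeas.comp (measurable_const.sub (measurable_id.const_smul h))).aestronglyMeasurable)
  have hdom : Tendsto
      (fun h : ℝ => ∫ u : EuclideanSpace ℝ (Fin d), K u * g (x - h • u))
      (nhdsWithin 0 (Set.Ioi 0))
      (nhds (∫ u : EuclideanSpace ℝ (Fin d), K u * g x)) := by
    apply tendsto_integral_filter_of_dominated_convergence
      (fun u => |K u| * C)
    · exact Filter.Eventually.of_forall meas
    · refine Filter.Eventually.of_forall fun h => ae_of_all _ fun u => ?_
      have : ‖K u * g (x - h • u)‖ = |K u| * |g (x - h • u)| := by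
        simp [abs_mul]
      rw [this]
      exact mul_le_mul_of_nonneg_left (hC _) (abs_nonneg _)
    · exact hKint.abs.mul_const C
    · refine ae_of_all _ fun u => ?_
      have hc : Tendsto (fun h : ℝ => x - h • u) (nhdsWithin 0 (Set.Ioi 0)) (nhds x) := by
        have : Continuous (fun h : ℝ => x - h • u) :=
          continuous_const.sub (continuous_id.smul continuous_const)
        have h2 : Tendsto (fun h : ℝ => x - h • u) (nhdsWithin 0 (Set.Ioi 0)) (nhds (x - (0:ℝ) • u)) :=
          (this.tendsto 0).mono_left nhdsWithin_le_nhds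
        simpa using h2
      exact tendsto_const_nhds.mul (hgx.tendsto.comp hc)
  have hval : (∫ u : EuclideanSpace ℝ (Fin d), K u * g x)
      = g x * ∫ u : EuclideanSpace ℝ (Fin d), K u := by
    rw [integral_mul_const, mul_comm]
  rw [hval] at hdom
  exact hdom.congr' (eventually_nhdsWithin_of_forall key)
end

section
/- Let Z₁,…,Z_N be i.i.d. real random variables with ε ≤ Z_i ≤ C almost surely for some constants 0 < ε ≤ C, let S̄ = (1/N) Σ_{i=1}^{N} Z_i and a = E[Z₁]. Then | E[1/S̄²] − 1/a² | ≤ 3 Var(Z₁)/(ε⁴ N). -/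
open MeasureTheory ProbabilityTheory Finset

lemma taylor_inv_sq_aux {s a ε : ℝ} (hε : 0 < ε) (hs : ε ≤ s) (ha : ε ≤ a) :
    |1 / s ^ 2 - 1 / a ^ 2 + 2 * (s - a) / a ^ 3| ≤ 3 / ε ^ 4 * (s - a) ^ 2 := by
  have hs0 : 0 < s := hε.trans_le hs
  have ha0 : 0 < a := hε.trans_le ha
  have hid : 1 / s ^ 2 - 1 / a ^ 2 + 2 * (s - a) / a ^ 3
      = (s - a) ^ 2 * (2 * s + a) / (s ^ 2 * a ^ 3) := by
    field_simp; ring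
  have h1 : (2 * s + a) / (s ^ 2 * a ^ 3) ≤ 3 / ε ^ 4 := by
    rw [div_le_div_iff₀ (by positivity) (by positivity)]
    have e1 : ε ^ 4 ≤ s * a ^ 3 := by
      nlinarith [pow_le_pow_left₀ hε.le ha 3, pow_pos hε 3]
    have e2 : ε ^ 4 ≤ s ^ 2 * a ^ 2 := by
      nlinarith [pow_le_pow_left₀ hε.le hs 2, pow_le_pow_left₀ hε.le ha 2, pow_pos hε 2]
    nlinarith [mul_le_mul_of_nonneg_left e1 hs0.le, mul_le_mul_of_nonneg_left e2 ha0.le]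
  rw [hid, abs_of_nonneg (by positivity)]
  calc (s - a) ^ 2 * (2 * s + a) / (s ^ 2 * a ^ 3)
      = (2 * s + a) / (s ^ 2 * a ^ 3) * (s - a) ^ 2 := by ring
    _ ≤ 3 / ε ^ 4 * (s - a) ^ 2 := mul_le_mul_of_nonneg_right h1 (sq_nonneg _)

/-- Control of the inverse squared empirical mean: if `Z₁,…,Z_N` are i.i.d. real random
variables with `ε ≤ Zᵢ ≤ C` a.s. (`0 < ε ≤ C`), `S̄ = (1/N)ΣᵢZᵢ` and `a = E[Z₁]`, then
`|E[1/S̄²] − 1/a²| ≤ 3 Var(Z₁)/(ε⁴ N)`. -/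
theorem inverse_squared_empirical_mean_bound {N : ℕ} (hN : 0 < N)
    {Ω : Type*} [MeasureSpace Ω] [IsProbabilityMeasure (ℙ : Measure Ω)]
    (Z : Fin N → Ω → ℝ)
    (hZmeas : ∀ i, Measurable (Z i))
    (hZindep : iIndepFun Z ℙ)
    (hZid : ∀ i j, Measure.map (Z i) ℙ = Measure.map (Z j) ℙ)
    {ε C : ℝ} (hε : 0 < ε) (hεC : ε ≤ C)
    (hbdd : ∀ᵐ ω ∂ℙ, ∀ i, ε ≤ Z i ω ∧ Z i ω ≤ C)
    {a : ℝ} (ha : a = ∫ ω, Z ⟨0, hN⟩ ω ∂ℙ) :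
    |(∫ ω, 1 / (((N : ℝ))⁻¹ * ∑ i, Z i ω) ^ 2 ∂ℙ) - 1 / a ^ 2|
      ≤ 3 * variance (Z ⟨0, hN⟩) ℙ / (ε ^ 4 * N) := by
  classical
  have hNR : (0 : ℝ) < N := Nat.cast_pos.mpr hN
  set S : Ω → ℝ := fun ω => (N : ℝ)⁻¹ * ∑ i, Z i ω with hSdef
  have hSmeas : Measurable S :=
    measurable_const.mul (Finset.measurable_sum _ fun i _ => hZmeas i)
  -- a.e. bounds on the empirical mean
  have hSbdd : ∀ᵐ ω ∂ℙ, ε ≤ S ω ∧ S ω ≤ C := by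
    filter_upwards [hbdd] with ω hω
    have hlow : (N : ℝ) * ε ≤ ∑ i, Z i ω := by
      calc (N : ℝ) * ε = ∑ _i : Fin N, ε := by simp [mul_comm]
        _ ≤ ∑ i, Z i ω := Finset.sum_le_sum fun i _ => (hω i).1
    have hhigh : ∑ i, Z i ω ≤ (N : ℝ) * C := by
      calc ∑ i, Z i ω ≤ ∑ _i : Fin N, C := Finset.sum_le_sum fun i _ => (hω i).2
        _ = (N : ℝ) * C := by simp [mul_comm]
    constructor
    · have := mul_le_mul_of_nonneg_left hlow (inv_nonneg.mpr hNR.le)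
      calc ε = (N : ℝ)⁻¹ * ((N : ℝ) * ε) := by field_simp
        _ ≤ S ω := this
    · have := mul_le_mul_of_nonneg_left hhigh (inv_nonneg.mpr hNR.le)
      calc S ω ≤ (N : ℝ)⁻¹ * ((N : ℝ) * C) := this
        _ = C := by field_simp
  -- MemLp and integrability
  have hZmem : ∀ i, MemLp (Z i) 2 ℙ := by
    intro i
    refine MemLp.of_bound (hZmeas i).aestronglyMeasurable C ?_
    filter_upwards [hbdd] with ω hω
    rw [Real.norm_eq_abs, abs_le]
    exact ⟨by linarith [(hω i).1], (hω i).2⟩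
  have hZint : ∀ i, Integrable (Z i) ℙ := fun i => (hZmem i).integrable one_le_two
  -- all means equal a
  have hmean : ∀ i, ∫ ω, Z i ω ∂ℙ = a := by
    intro i
    have h0 : ∫ x, x ∂(Measure.map (Z i) ℙ) = ∫ ω, Z i ω ∂ℙ :=
      integral_map (hZmeas i).aemeasurable measurable_id.aestronglyMeasurable
    have h1 : ∫ x, x ∂(Measure.map (Z ⟨0, hN⟩) ℙ) = ∫ ω, Z ⟨0, hN⟩ ω ∂ℙ :=
      integral_map (hZmeas _).aemeasurable measurable_id.aestronglyMeasurable
    rw [ha, ← h0, hZid i ⟨0, hN⟩, h1]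
  -- all variances equal
  have hsqint : ∀ i, ∫ ω, Z i ω ^ 2 ∂ℙ = ∫ ω, Z ⟨0, hN⟩ ω ^ 2 ∂ℙ := by
    intro i
    have h0 : ∫ x, x ^ 2 ∂(Measure.map (Z i) ℙ) = ∫ ω, Z i ω ^ 2 ∂ℙ :=
      integral_map (hZmeas i).aemeasurable (measurable_id.pow_const 2).aestronglyMeasurable
    have h1 : ∫ x, x ^ 2 ∂(Measure.map (Z ⟨0, hN⟩) ℙ) = ∫ ω, Z ⟨0, hN⟩ ω ^ 2 ∂ℙ :=
      integral_map (hZmeas _).aemeasurable (measurable_id.pow_const 2).aestronglyMeasurable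
    rw [← h0, hZid i ⟨0, hN⟩, h1]
  have hvar : ∀ i, variance (Z i) ℙ = variance (Z ⟨0, hN⟩) ℙ := by
    intro i
    rw [variance_eq_sub (hZmem i), variance_eq_sub (hZmem ⟨0, hN⟩)]
    simp only [Pi.pow_apply]
    rw [hsqint i, hmean i, hmean ⟨0, hN⟩]
  -- variance of the sum
  have hMemSum : MemLp (∑ i, Z i) 2 ℙ := memLp_finset_sum' _ fun i _ => hZmem i
  have hvarsum : variance (∑ i, Z i) ℙ = (N : ℝ) * variance (Z ⟨0, hN⟩) ℙ := by
    rw [IndepFun.variance_sum (fun i _ => hZmem i)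
      (fun i _ j _ hij => hZindep.indepFun hij)]
    simp [hvar, Finset.card_univ, mul_comm]
  have hSsmul : S = ((N : ℝ)⁻¹) • (∑ i, Z i) := by
    funext ω; simp [hSdef, Finset.sum_apply]
  have hSmem : MemLp S 2 ℙ := by rw [hSsmul]; exact hMemSum.const_smul _
  have hSvar : variance S ℙ = variance (Z ⟨0, hN⟩) ℙ / N := by
    rw [hSsmul, variance_smul, hvarsum]
    field_simp
  -- mean of S
  have hSint : Integrable S ℙ := hSmem.integrable one_le_two
  have hES : ∫ ω, S ω ∂ℙ = a := by
    simp only [hSdef]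
    rw [integral_const_mul, integral_finset_sum _ fun i _ => hZint i]
    simp only [hmean, Finset.sum_const, Finset.card_univ, Fintype.card_fin, nsmul_eq_mul]
    field_simp
  -- second moment of S - a
  have hvS : ∫ ω, (S ω - a) ^ 2 ∂ℙ = variance S ℙ := by
    rw [variance_eq_integral hSmeas.aemeasurable, hES]
  -- bounds on a
  have haε : ε ≤ a := by
    rw [ha]
    have h1 : (∫ _ω, ε ∂(ℙ : Measure Ω)) ≤ ∫ ω, Z ⟨0, hN⟩ ω ∂ℙ := by
      refine integral_mono_ae (integrable_const ε) (hZint _) ?_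
      filter_upwards [hbdd] with ω hω using (hω ⟨0, hN⟩).1
    simpa using h1
  have ha0 : 0 < a := hε.trans_le haε
  -- integrability of the pieces
  have hg1int : Integrable (fun ω => 1 / S ω ^ 2) ℙ := by
    rw [← memLp_one_iff_integrable]
    refine MemLp.of_bound (measurable_const.div (hSmeas.pow_const 2)).aestronglyMeasurable
      (1 / ε ^ 2) ?_
    filter_upwards [hSbdd] with ω hω
    have h1 : 0 < S ω := hε.trans_le hω.1
    rw [Real.norm_eq_abs, abs_of_nonneg (by positivity)]
    exact one_div_le_one_div_of_le (by positivity) (pow_le_pow_left₀ hε.le hω.1 2)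
  have hg2int : Integrable (fun ω => 2 * (S ω - a) / a ^ 3) ℙ := by
    have heq : (fun ω => 2 * (S ω - a) / a ^ 3) = fun ω => (2 / a ^ 3) * (S ω - a) := by
      funext ω; ring
    rw [heq]
    exact (hSint.sub (integrable_const a)).const_mul _
  have hg2zero : ∫ ω, 2 * (S ω - a) / a ^ 3 ∂ℙ = 0 := by
    have heq : (fun ω => 2 * (S ω - a) / a ^ 3) = fun ω => (2 / a ^ 3) * (S ω - a) := by
      funext ω; ring
    rw [heq, integral_const_mul, integral_sub hSint (integrable_const a), hES]
    simp
  have hg3int : Integrable (fun ω => 3 / ε ^ 4 * (S ω - a) ^ 2) ℙ := by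
    refine Integrable.const_mul ?_ _
    have := (hSmem.sub (memLp_const a)).integrable_sq
    simpa [Pi.sub_apply] using this
  -- pointwise Taylor bound
  have hptwise : ∀ᵐ ω ∂ℙ,
      |1 / S ω ^ 2 - 1 / a ^ 2 + 2 * (S ω - a) / a ^ 3| ≤ 3 / ε ^ 4 * (S ω - a) ^ 2 := by
    filter_upwards [hSbdd] with ω hω
    exact taylor_inv_sq_aux hε hω.1 haε
  -- splitting the integral
  have hgoal_eq : (∫ ω, 1 / (((N : ℝ))⁻¹ * ∑ i, Z i ω) ^ 2 ∂ℙ) = ∫ ω, 1 / S ω ^ 2 ∂ℙ := rfl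
  have hgint : Integrable (fun ω => 1 / S ω ^ 2 - 1 / a ^ 2 + 2 * (S ω - a) / a ^ 3) ℙ :=
    (hg1int.sub (integrable_const (1 / a ^ 2))).add hg2int
  have hsubint : Integrable (fun ω => 1 / S ω ^ 2 - 1 / a ^ 2) ℙ :=
    hg1int.sub (integrable_const _)
  have hsplit : (∫ ω, 1 / S ω ^ 2 ∂ℙ) - 1 / a ^ 2
      = ∫ ω, (1 / S ω ^ 2 - 1 / a ^ 2 + 2 * (S ω - a) / a ^ 3) ∂ℙ := by
    rw [integral_add hsubint hg2int,
      integral_sub hg1int (integrable_const _), hg2zero, integral_const]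
    simp
  rw [hgoal_eq, hsplit]
  calc |∫ ω, (1 / S ω ^ 2 - 1 / a ^ 2 + 2 * (S ω - a) / a ^ 3) ∂ℙ|
      ≤ ∫ ω, |1 / S ω ^ 2 - 1 / a ^ 2 + 2 * (S ω - a) / a ^ 3| ∂ℙ := by
        exact abs_integral_le_integral_abs
    _ ≤ ∫ ω, 3 / ε ^ 4 * (S ω - a) ^ 2 ∂ℙ := integral_mono_ae hgint.abs hg3int hptwise
    _ = 3 / ε ^ 4 * ∫ ω, (S ω - a) ^ 2 ∂ℙ := integral_const_mul _ _
    _ = 3 / ε ^ 4 * (variance (Z ⟨0, hN⟩) ℙ / N) := by rw [hvS, hSvar]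
    _ = 3 * variance (Z ⟨0, hN⟩) ℙ / (ε ^ 4 * N) := by ring
end
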